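/- For every binary string s ∈ {0,1}^n, with d_x = wt(s) (the number of 1s in s) and d_y = n − wt(s), the following identity of polynomials with integer coefficients holds: P_s(x,y) · P*_s(x,y) = x^{d_x} y^{d_y} · (n + 1 + S_s(x,y)) + S*_s(x,y), where P*_s(x,y) = x^{d_x} y^{d_y} P_s(1/x, 1/y) and S*_s(x,y) = x^{d_x} y^{d_y} S_s(1/x, 1/y) are the reciprocal polynomials of P_s and S_s (note that d_x and d_y are simultaneously the x- and y-degrees of both P_s and S_s). -/

import Mathlib

open MvPolynomial

/-- All nonempty contiguous substrings of a binary string `s`. -/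
def substrings (s : List Bool) : List (List Bool) :=
  (List.range s.length).flatMap
    (fun i => (List.range (s.length - i)).map (fun j => (s.drop i).take (j + 1)))

/-- The prefix polynomial `P_s(x,y) = Σ_{i=0}^n x^{u_i} y^{i-u_i}` over ℤ, where
`u_i` is the number of 1s in the prefix of `s` of length `i`; here `X 0 = x`,
`X 1 = y`. -/
noncomputable def prefixPolyInt (s : List Bool) : MvPolynomial (Fin 2) ℤ :=
  ∑ i ∈ Finset.range (s.length + 1),
    X 0 ^ ((s.take i).count true) * X 1 ^ ((s.take i).count false)

/-- The reciprocal polynomial `P*_s(x,y) = x^{d_x} y^{d_y} P_s(1/x,1/y)` of `P_s`,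
where `d_x = wt(s)` and `d_y = n - wt(s)` are the `x`- and `y`-degrees of `P_s`:
each monomial `x^{u_i} y^{i-u_i}` is replaced by `x^{d_x-u_i} y^{d_y-(i-u_i)}`. -/
noncomputable def prefixPolyRecipInt (s : List Bool) : MvPolynomial (Fin 2) ℤ :=
  ∑ i ∈ Finset.range (s.length + 1),
    X 0 ^ (s.count true - (s.take i).count true) *
      X 1 ^ (s.count false - (s.take i).count false)

/-- The composition polynomial `S_s(x,y) = Σ_{1 ≤ i ≤ j ≤ n} x^{o_{i,j}} y^{z_{i,j}}`
over ℤ, summed over all nonempty substrings of `s`. -/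
noncomputable def compPolyInt (s : List Bool) : MvPolynomial (Fin 2) ℤ :=
  ((substrings s).map (fun u => X 0 ^ (u.count true) * X 1 ^ (u.count false))).sum

/-- The reciprocal polynomial `S*_s(x,y) = x^{d_x} y^{d_y} S_s(1/x,1/y)` of `S_s`
(whose `x`- and `y`-degrees are also `d_x = wt(s)` and `d_y = n - wt(s)`): each
monomial `x^o y^z` is replaced by `x^{d_x-o} y^{d_y-z}`. -/
noncomputable def compPolyRecipInt (s : List Bool) : MvPolynomial (Fin 2) ℤ :=
  ((substrings s).map (fun u =>
    X 0 ^ (s.count true - u.count true) * X 1 ^ (s.count false - u.count false))).sum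

lemma substrings_map_sum (s : List Bool) (f : List Bool → MvPolynomial (Fin 2) ℤ) :
    ((substrings s).map f).sum =
    ∑ i ∈ Finset.range s.length, ∑ j ∈ Finset.range (s.length - i),
      f ((s.drop i).take (j+1)) := by
  rw [substrings, List.map_flatMap, List.flatMap_def, List.sum_flatten, List.map_map]
  simp [Function.comp]
  rfl

lemma count_take_le (s : List Bool) (b : Bool) (i : ℕ) :
    (s.take i).count b ≤ s.count b :=
  (List.take_sublist i s).count_le b

lemma count_take_mono (s : List Bool) (b : Bool) {i j : ℕ} (h : i ≤ j) :
    (s.take i).count b ≤ (s.take j).count b := by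
  have h1 : (s.take j).take i = s.take i := by
    rw [List.take_take, min_eq_left h]
  calc (s.take i).count b = ((s.take j).take i).count b := by rw [h1]
    _ ≤ (s.take j).count b := (List.take_sublist i (s.take j)).count_le b

lemma count_sub (s : List Bool) (b : Bool) (i k : ℕ) :
    ((s.drop i).take (k+1)).count b = (s.take (i+k+1)).count b - (s.take i).count b := by
  have h : s.take (i+(k+1)) = s.take i ++ (s.drop i).take (k+1) := List.take_add
  have h2 : (s.take (i+k+1)).count b = (s.take i).count b + ((s.drop i).take (k+1)).count b := by
    have e : i + k + 1 = i + (k+1) := by omega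
    rw [e, h, List.count_append]
  omega

/-- For every binary string `s ∈ {0,1}^n`, with `d_x = wt(s)` and
`d_y = n - wt(s)`, one has the identity of polynomials with integer coefficients
`P_s(x,y) · P*_s(x,y) = x^{d_x} y^{d_y} (n + 1 + S_s(x,y)) + S*_s(x,y)`. -/
theorem prefixPoly_mul_recip (s : List Bool) :
    prefixPolyInt s * prefixPolyRecipInt s =
      X 0 ^ (s.count true) * X 1 ^ (s.count false) *
        (((s.length : MvPolynomial (Fin 2) ℤ) + 1) + compPolyInt s) +
      compPolyRecipInt s := by
  set n := s.length with hn
  set dx := s.count true with hdx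
  set dy := s.count false with hdy
  set U : ℕ → ℕ := fun i => (s.take i).count true with hU
  set V : ℕ → ℕ := fun i => (s.take i).count false with hV
  set F : ℕ → ℕ → MvPolynomial (Fin 2) ℤ :=
    fun i j => X 0 ^ (U i + (dx - U j)) * X 1 ^ (V i + (dy - V j)) with hF
  have hUle : ∀ i, U i ≤ dx := fun i => count_take_le s true i
  have hVle : ∀ i, V i ≤ dy := fun i => count_take_le s false i
  have hUmono : ∀ {i j : ℕ}, i ≤ j → U i ≤ U j := fun h => count_take_mono s true h
  have hVmono : ∀ {i j : ℕ}, i ≤ j → V i ≤ V j := fun h => count_take_mono s false h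
  -- Step 1: LHS as double sum
  have step1 : prefixPolyInt s * prefixPolyRecipInt s =
      ∑ i ∈ Finset.range (n+1), ∑ j ∈ Finset.range (n+1), F i j := by
    rw [prefixPolyInt, prefixPolyRecipInt, Finset.sum_mul_sum]
    refine Finset.sum_congr rfl fun i _ => Finset.sum_congr rfl fun j _ => ?_
    simp only [hF, pow_add]
    ring
  -- Step 2: split the inner sum
  have step2 : ∀ i ∈ Finset.range (n+1),
      ∑ j ∈ Finset.range (n+1), F i j =
        F i i + (∑ j ∈ Finset.range i, F i j + ∑ j ∈ Finset.Ico (i+1) (n+1), F i j) := by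
    intro i hi
    rw [Finset.mem_range] at hi
    have h1 : ∑ j ∈ Finset.range i, F i j + ∑ j ∈ Finset.Ico i (n+1), F i j
        = ∑ j ∈ Finset.range (n+1), F i j := by
      rw [Finset.range_eq_Ico, Finset.range_eq_Ico]
      exact Finset.sum_Ico_consecutive (F i) (Nat.zero_le i) (by omega : i ≤ n+1)
    have h2 : ∑ j ∈ Finset.Ico i (n+1), F i j
        = F i i + ∑ j ∈ Finset.Ico (i+1) (n+1), F i j :=
      Finset.sum_eq_sum_Ico_succ_bot (by omega) _
    rw [← h1, h2]; ring
  have step2' : ∑ i ∈ Finset.range (n+1), ∑ j ∈ Finset.range (n+1), F i j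
      = (∑ i ∈ Finset.range (n+1), F i i)
        + ((∑ i ∈ Finset.range (n+1), ∑ j ∈ Finset.range i, F i j)
          + ∑ i ∈ Finset.range (n+1), ∑ j ∈ Finset.Ico (i+1) (n+1), F i j) := by
    rw [Finset.sum_congr rfl step2, Finset.sum_add_distrib, Finset.sum_add_distrib]
  -- Step 3: diagonal
  have step3 : ∑ i ∈ Finset.range (n+1), F i i
      = ((n : MvPolynomial (Fin 2) ℤ) + 1) * (X 0 ^ dx * X 1 ^ dy) := by
    have h : ∀ i ∈ Finset.range (n+1), F i i = X 0 ^ dx * X 1 ^ dy := by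
      intro i _
      have e1 : U i + (dx - U i) = dx := by have := hUle i; omega
      have e2 : V i + (dy - V i) = dy := by have := hVle i; omega
      simp only [hF, e1, e2]
    rw [Finset.sum_congr rfl h, Finset.sum_const, Finset.card_range, nsmul_eq_mul]
    push_cast
    ring
  -- Step 4: lower triangle
  have step4 : ∑ i ∈ Finset.range (n+1), ∑ j ∈ Finset.range i, F i j
      = X 0 ^ dx * X 1 ^ dy * compPolyInt s := by
    have swap : ∑ i ∈ Finset.range (n+1), ∑ j ∈ Finset.range i, F i j
        = ∑ j ∈ Finset.range (n+1), ∑ i ∈ Finset.Ico (j+1) (n+1), F i j := by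
      refine Finset.sum_comm' ?_
      intro i j
      simp only [Finset.mem_range, Finset.mem_Ico]
      omega
    rw [swap, Finset.sum_range_succ]
    have hempty : ∑ i ∈ Finset.Ico (n+1) (n+1), F i n = 0 := by simp
    rw [hempty, add_zero]
    rw [compPolyInt, substrings_map_sum, Finset.mul_sum]
    refine Finset.sum_congr rfl fun j hj => ?_
    rw [Finset.mul_sum, Finset.sum_Ico_eq_sum_range]
    have e : n + 1 - (j + 1) = n - j := by omega
    rw [e]
    refine Finset.sum_congr rfl fun k hk => ?_
    have ho := count_sub s true j k
    have hz := count_sub s false j k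
    have e1 : U (j+1+k) + (dx - U j) = dx + (((s.drop j).take (k+1)).count true) := by
      have h1 : U j ≤ U (j+k+1) := hUmono (by omega)
      have h2 : U (j+k+1) ≤ dx := hUle _
      have e' : j + 1 + k = j + k + 1 := by omega
      rw [e', ho]; simp only [hU] at *; omega
    have e2 : V (j+1+k) + (dy - V j) = dy + (((s.drop j).take (k+1)).count false) := by
      have h1 : V j ≤ V (j+k+1) := hVmono (by omega)
      have h2 : V (j+k+1) ≤ dy := hVle _
      have e' : j + 1 + k = j + k + 1 := by omega
      rw [e', hz]; simp only [hV] at *; omega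
    simp only [hF]
    rw [e1, e2, pow_add, pow_add]
    ring
  -- Step 5: upper triangle
  have step5 : ∑ i ∈ Finset.range (n+1), ∑ j ∈ Finset.Ico (i+1) (n+1), F i j
      = compPolyRecipInt s := by
    rw [Finset.sum_range_succ]
    have hempty : ∑ j ∈ Finset.Ico (n+1) (n+1), F n j = 0 := by simp
    rw [hempty, add_zero]
    rw [compPolyRecipInt, substrings_map_sum]
    refine Finset.sum_congr rfl fun i hi => ?_
    rw [Finset.sum_Ico_eq_sum_range]
    have e : n + 1 - (i + 1) = n - i := by omega
    rw [e]
    refine Finset.sum_congr rfl fun k hk => ?_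
    have ho := count_sub s true i k
    have hz := count_sub s false i k
    have e1 : U i + (dx - U (i+1+k)) = dx - (((s.drop i).take (k+1)).count true) := by
      have h1 : U i ≤ U (i+k+1) := hUmono (by omega)
      have h2 : U (i+k+1) ≤ dx := hUle _
      have e' : i + 1 + k = i + k + 1 := by omega
      rw [e', ho]; simp only [hU] at *; omega
    have e2 : V i + (dy - V (i+1+k)) = dy - (((s.drop i).take (k+1)).count false) := by
      have h1 : V i ≤ V (i+k+1) := hVmono (by omega)
      have h2 : V (i+k+1) ≤ dy := hVle _
      have e' : i + 1 + k = i + k + 1 := by omega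
      rw [e', hz]; simp only [hV] at *; omega
    simp only [hF]
    rw [e1, e2]
  rw [step1, step2', step3, step4, step5]
  ring
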